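/- For every real number x, the function t ↦ t · log(1 + exp(x / t)) tends to max(0, x) as t tends to 0 from the right (i.e., along the filter 𝓝[>] 0 on ℝ). -/

import Mathlib

open Real Filter

theorem stmt_10 (x : ℝ) :
    Filter.Tendsto (fun t : ℝ => t * Real.log (1 + Real.exp (x / t)))
      (nhdsWithin 0 (Set.Ioi 0)) (nhds (max 0 x)) := by
  have hrem : Tendsto (fun t : ℝ => t * Real.log (1 + Real.exp (-|x| / t)))
      (nhdsWithin 0 (Set.Ioi 0)) (nhds 0) := by
    apply squeeze_zero'
    · filter_upwards [self_mem_nhdsWithin] with t ht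
      have h1 : (0:ℝ) ≤ Real.log (1 + Real.exp (-|x| / t)) := by
        apply Real.log_nonneg
        have := Real.exp_pos (-|x| / t)
        linarith
      exact mul_nonneg (le_of_lt ht) h1
    · filter_upwards [self_mem_nhdsWithin] with t ht
      have he : Real.exp (-|x| / t) ≤ 1 := by
        rw [Real.exp_le_one_iff]
        apply div_nonpos_of_nonpos_of_nonneg
        · simp
        · exact le_of_lt ht
      have h2 : Real.log (1 + Real.exp (-|x| / t)) ≤ Real.log 2 := by
        apply Real.log_le_log (by positivity)
        linarith
      exact mul_le_mul_of_nonneg_left h2 (le_of_lt ht)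
    · have : Tendsto (fun t : ℝ => t * Real.log 2) (nhds 0) (nhds 0) := by
        have h := (continuous_mul_right (Real.log 2)).tendsto (0:ℝ); rwa [zero_mul] at h
      exact this.mono_left nhdsWithin_le_nhds
  have key : ∀ t ∈ Set.Ioi (0:ℝ),
      max 0 x + t * Real.log (1 + Real.exp (-|x| / t))
        = t * Real.log (1 + Real.exp (x / t)) := by
    intro t ht
    have ht' : t ≠ 0 := ne_of_gt ht
    rcases le_or_gt 0 x with hx | hx
    · have hax : |x| = x := abs_of_nonneg hx
      rw [hax, max_eq_right hx]
      have h1 : (1 : ℝ) + Real.exp (x / t)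
          = Real.exp (x / t) * (1 + Real.exp (-x / t)) := by
        rw [mul_add, mul_one, ← Real.exp_add, neg_div]
        simp [add_comm]
      rw [h1, Real.log_mul (Real.exp_ne_zero _) (by positivity), Real.log_exp]
      field_simp
    · have : |x| = -x := abs_of_neg hx
      rw [this, max_eq_left hx.le]
      ring_nf
  have := (tendsto_const_nhds (x := max 0 x)
      (f := nhdsWithin (0:ℝ) (Set.Ioi 0))).add hrem
  simp only [add_zero] at this
  refine this.congr' ?_
  filter_upwards [self_mem_nhdsWithin] with t ht using key t ht
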